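/- Let G be a connected graph with n ≥ 2 vertices, m ≥ 1 edges, maximum degree Δ and minimum degree δ, with γ_n ≥ √c/(2n) where c = m(n³ − n² − 2mn + 4m) and γ_i = |q_i − 2m/n| ordered nonincreasingly. Then QE(G) ≥ (2√2/3)·√((2m + (Δ−δ)²/2)·n), with equality if and only if G ≅ K_3. -/

import Mathlib

open Finset Matrix BigOperators

/-- The signless Laplacian matrix `Q(G) = D(G) + A(G)` of a simple graph, over `ℝ`. -/
noncomputable def signlessLaplacian {V : Type*} [Fintype V] [DecidableEq V]
    (G : SimpleGraph V) [DecidableRel G.Adj] : Matrix V V ℝ :=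
  Matrix.diagonal (fun v => (G.degree v : ℝ)) + G.adjMatrix ℝ

lemma signlessLaplacian_isHermitian {V : Type*} [Fintype V] [DecidableEq V]
    (G : SimpleGraph V) [DecidableRel G.Adj] : (signlessLaplacian G).IsHermitian := by
  unfold signlessLaplacian
  apply Matrix.IsHermitian.add
  · exact Matrix.isHermitian_diagonal _
  · rw [Matrix.IsHermitian, conjTranspose_eq_transpose_of_trivial]
    exact G.isSymm_adjMatrix

/-- The signless Laplacian eigenvalues of `G` (as a function on the vertex index type). -/
noncomputable def qEig {V : Type*} [Fintype V] [DecidableEq V]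
    (G : SimpleGraph V) [DecidableRel G.Adj] : V → ℝ :=
  (signlessLaplacian_isHermitian G).eigenvalues

/-- The number of edges of `G`, as a real number. -/
noncomputable def mE {V : Type*} [Fintype V] [DecidableEq V]
    (G : SimpleGraph V) [DecidableRel G.Adj] : ℝ :=
  G.edgeFinset.card

/-- The first Zagreb index `M₁(G) = Σ d(v)²`, as a real number. -/
noncomputable def M1 {V : Type*} [Fintype V] [DecidableEq V]
    (G : SimpleGraph V) [DecidableRel G.Adj] : ℝ :=
  ∑ v, (G.degree v : ℝ) ^ 2

/-- The signless Laplacian energy `QE(G) = Σ |qᵢ - 2m/n|`. -/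
noncomputable def QE {V : Type*} [Fintype V] [DecidableEq V]
    (G : SimpleGraph V) [DecidableRel G.Adj] : ℝ :=
  ∑ i, |qEig G i - 2 * mE G / (Fintype.card V : ℝ)|

set_option maxHeartbeats 16000000
set_option linter.unusedSectionVars false

lemma trace_pow_eq_sum_eig {V : Type*} [Fintype V] [DecidableEq V]
    {A : Matrix V V ℝ} (hA : A.IsHermitian) (k : ℕ) :
    (A ^ k).trace = ∑ i, hA.eigenvalues i ^ k := by
  set U : Matrix V V ℝ := (hA.eigenvectorUnitary : Matrix V V ℝ) with hUdef
  have hU1 : U * star U = 1 := (Matrix.mem_unitaryGroup_iff).mp hA.eigenvectorUnitary.2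
  have hU2 : star U * U = 1 := (Matrix.mem_unitaryGroup_iff').mp hA.eigenvectorUnitary.2
  set D : Matrix V V ℝ := Matrix.diagonal (RCLike.ofReal ∘ hA.eigenvalues) with hDdef
  have hpow : ∀ j : ℕ, A ^ j = U * D ^ j * star U := by
    intro j
    induction j with
    | zero => simp [pow_zero, hU1]
    | succ j ih =>
        rw [pow_succ, ih, (show A = U * D * star U from hA.spectral_theorem)]
        have : U * D ^ j * star U * (U * D * star U) = U * D ^ j * (star U * U) * D * star U := by
          noncomm_ring
        rw [this, hU2]
        noncomm_ring
  rw [hpow k, Matrix.trace_mul_cycle, hU2, Matrix.one_mul,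
    Matrix.diagonal_pow, Matrix.trace_diagonal]
  simp [RCLike.ofReal]


section helpers

variable {V : Type*} [Fintype V] [DecidableEq V] (G : SimpleGraph V) [DecidableRel G.Adj]

lemma sum_deg_real : ∑ v, (G.degree v : ℝ) = 2 * mE G := by
  rw [mE, ← Nat.cast_sum, G.sum_degrees_eq_twice_card_edges]
  push_cast
  ring

lemma trace_Q : (signlessLaplacian G).trace = 2 * mE G := by
  rw [signlessLaplacian, Matrix.trace_add, Matrix.trace_diagonal, SimpleGraph.trace_adjMatrix,
    add_zero, sum_deg_real]

lemma trace_Q_sq : ((signlessLaplacian G) ^ 2).trace = M1 G + 2 * mE G := by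
  have hexp : (signlessLaplacian G) ^ 2 =
      Matrix.diagonal (fun v => (G.degree v : ℝ)) * Matrix.diagonal (fun v => (G.degree v : ℝ))
      + Matrix.diagonal (fun v => (G.degree v : ℝ)) * G.adjMatrix ℝ
      + G.adjMatrix ℝ * Matrix.diagonal (fun v => (G.degree v : ℝ))
      + G.adjMatrix ℝ * G.adjMatrix ℝ := by
    rw [signlessLaplacian]; noncomm_ring
  rw [hexp]
  rw [Matrix.trace_add, Matrix.trace_add, Matrix.trace_add]
  have h1 : (Matrix.diagonal (fun v => (G.degree v : ℝ)) * Matrix.diagonal (fun v => (G.degree v : ℝ))).trace = M1 G := by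
    rw [Matrix.diagonal_mul_diagonal, Matrix.trace_diagonal]
    simp [M1, sq]
  have h2 : (Matrix.diagonal (fun v => (G.degree v : ℝ)) * G.adjMatrix ℝ).trace = 0 := by
    rw [Matrix.trace]
    apply Finset.sum_eq_zero
    intro v _
    simp only [Matrix.diag, SimpleGraph.mul_adjMatrix_apply]
    apply Finset.sum_eq_zero
    intro u hu
    exact Matrix.diagonal_apply_ne _ (G.ne_of_adj ((SimpleGraph.mem_neighborFinset _ _ _).mp hu))
  have h3 : (G.adjMatrix ℝ * Matrix.diagonal (fun v => (G.degree v : ℝ))).trace = 0 := by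
    rw [Matrix.trace]
    apply Finset.sum_eq_zero
    intro v _
    simp only [Matrix.diag, SimpleGraph.adjMatrix_mul_apply]
    apply Finset.sum_eq_zero
    intro u hu
    exact Matrix.diagonal_apply_ne _ (G.ne_of_adj ((SimpleGraph.mem_neighborFinset _ _ _).mp hu)).symm
  have h4 : (G.adjMatrix ℝ * G.adjMatrix ℝ).trace = 2 * mE G := by
    rw [Matrix.trace]
    have : ∀ v : V, (G.adjMatrix ℝ * G.adjMatrix ℝ).diag v = (G.degree v : ℝ) := by
      intro v; simpa [Matrix.diag] using G.adjMatrix_mul_self_apply_self (α := ℝ) v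
    rw [Finset.sum_congr rfl (fun v _ => this v), sum_deg_real]
  rw [h1, h2, h3, h4]; ring

lemma nbr_sum_eq_M1 : ∑ u, ∑ v ∈ G.neighborFinset u, (G.degree v : ℝ) = M1 G := by
  have h1 : ∀ u : V, ∑ v ∈ G.neighborFinset u, (G.degree v : ℝ)
      = ∑ v, if G.Adj u v then (G.degree v : ℝ) else 0 := by
    intro u
    rw [SimpleGraph.neighborFinset_eq_filter, Finset.sum_filter]
  rw [Finset.sum_congr rfl (fun u _ => h1 u), Finset.sum_comm]
  rw [M1]
  apply Finset.sum_congr rfl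
  intro v _
  have : ∀ u : V, (if G.Adj u v then (G.degree v : ℝ) else 0) = (if G.Adj v u then (G.degree v : ℝ) else 0) := by
    intro u; simp [SimpleGraph.adj_comm]
  rw [Finset.sum_congr rfl (fun u _ => this u), ← Finset.sum_filter, ← SimpleGraph.neighborFinset_eq_filter,
    Finset.sum_const, SimpleGraph.card_neighborFinset_eq_degree]
  simp [sq, mul_comm]

lemma degree_pos_of_connected (hconn : G.Connected) (hcard : 2 ≤ Fintype.card V) (v : V) :
    1 ≤ G.degree v := by
  obtain ⟨w, hw⟩ := Fintype.exists_ne_of_one_lt_card (by omega) v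
  obtain ⟨p⟩ := hconn.preconnected v w
  cases p with
  | nil => exact absurd rfl hw
  | cons h _ =>
      have hd := (G.degree_pos_iff_exists_adj v).mpr ⟨_, h⟩
      omega

lemma deCaen (hconn : G.Connected) (hcard : 2 ≤ Fintype.card V) :
    ((Fintype.card V : ℝ) - 1) * M1 G ≤
      2 * mE G ^ 2 + mE G * ((Fintype.card V : ℝ) - 1) * ((Fintype.card V : ℝ) - 2) := by
  set N : ℝ := (Fintype.card V : ℝ) with hN
  have claim : ∀ u : V, (N - 1) * ((G.degree u : ℝ)^2 + ∑ v ∈ G.neighborFinset u, (G.degree v:ℝ))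
      ≤ (2 * mE G + (N-2)*(N-1)) * (G.degree u : ℝ) := by
    intro u
    set d : ℝ := (G.degree u : ℝ) with hd
    set SN : ℝ := ∑ v ∈ G.neighborFinset u, (G.degree v:ℝ) with hSNdef
    set R : Finset V := univ \ insert u (G.neighborFinset u) with hR
    set DR : ℝ := ∑ v ∈ R, (G.degree v:ℝ) with hDRdef
    have hu : u ∉ G.neighborFinset u := by simp
    have hsplit : 2 * mE G = d + SN + DR := by
      rw [← sum_deg_real G]
      have huniv : (univ : Finset V) = insert u (G.neighborFinset u) ∪ R := by
        rw [hR, Finset.union_sdiff_of_subset (Finset.subset_univ _)]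
      rw [huniv, Finset.sum_union Finset.sdiff_disjoint.symm, Finset.sum_insert hu]
    have hdlt : G.degree u + 1 ≤ Fintype.card V := G.degree_lt_card_verts u
    have hd_le : d ≤ N - 1 := by
      rw [hd, hN]
      have := (Nat.cast_le (α := ℝ)).mpr hdlt
      push_cast at this; linarith
    have hcardR : (R.card : ℝ) = N - 1 - d := by
      have h1 : R.card = Fintype.card V - (G.degree u + 1) := by
        rw [hR, Finset.card_sdiff_of_subset (Finset.subset_univ _), Finset.card_insert_of_notMem hu,
          SimpleGraph.card_neighborFinset_eq_degree, Finset.card_univ]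
      rw [h1, Nat.cast_sub hdlt]
      push_cast [hN, hd]; ring
    have hDR : N - 1 - d ≤ DR := by
      rw [← hcardR, hDRdef]
      calc (R.card : ℝ) = ∑ _v ∈ R, (1:ℝ) := by simp
        _ ≤ ∑ v ∈ R, (G.degree v:ℝ) := Finset.sum_le_sum fun v _ => by
            exact_mod_cast degree_pos_of_connected G hconn hcard v
    have hSN : SN ≤ d * (N-1) := by
      rw [hSNdef]
      calc ∑ v ∈ G.neighborFinset u, (G.degree v:ℝ) ≤ ∑ _v ∈ G.neighborFinset u, (N-1) := by
            apply Finset.sum_le_sum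
            intro v _
            have := (Nat.cast_le (α := ℝ)).mpr (G.degree_lt_card_verts v)
            push_cast at this; rw [hN]; linarith
        _ = d * (N-1) := by
            rw [Finset.sum_const, SimpleGraph.card_neighborFinset_eq_degree, hd]
            simp [nsmul_eq_mul]
    have hd1 : (1:ℝ) ≤ d := by rw [hd]; exact_mod_cast degree_pos_of_connected G hconn hcard u
    have hr : (0:ℝ) ≤ N - 1 - d := by linarith
    have hint1 : SN * (N-1-d) ≤ d * (N-1) * (N-1-d) := mul_le_mul_of_nonneg_right hSN hr
    have hint2 : d * (N-1-d) ≤ d * DR := mul_le_mul_of_nonneg_left hDR (by linarith)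
    nlinarith [hint1, hint2, hsplit]
  have hsum := Finset.sum_le_sum (fun u (_ : u ∈ (univ : Finset V)) => claim u)
  have hL : ∑ u, (N - 1) * ((G.degree u : ℝ)^2 + ∑ v ∈ G.neighborFinset u, (G.degree v:ℝ))
      = (N-1) * (M1 G + M1 G) := by
    rw [← Finset.mul_sum, Finset.sum_add_distrib, nbr_sum_eq_M1, M1]
  have hRt : ∑ u, (2 * mE G + (N-2)*(N-1)) * (G.degree u : ℝ)
      = (2 * mE G + (N-2)*(N-1)) * (2 * mE G) := by
    rw [← Finset.mul_sum, sum_deg_real]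
  rw [hL, hRt] at hsum
  nlinarith [hsum]

lemma sum_qEig : ∑ i, qEig G i = 2 * mE G := by
  have h := trace_pow_eq_sum_eig (signlessLaplacian_isHermitian G) 1
  rw [pow_one, trace_Q] at h
  simpa [qEig] using h.symm

lemma sum_qEig_sq : ∑ i, (qEig G i)^2 = M1 G + 2 * mE G := by
  have h := trace_pow_eq_sum_eig (signlessLaplacian_isHermitian G) 2
  rw [trace_Q_sq] at h
  simpa [qEig] using h.symm

end helpers

/-- Lower bound for `QE(G)` of a connected graph under `γₙ ≥ √c/(2n)` with
`c = m(n³ - n² - 2mn + 4m)`: `QE(G) ≥ (2√2/3)√((2m + (Δ-δ)²/2)·n)`, with equality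
iff `G ≅ K₃`. -/
theorem QE_lower_bound_cor {n : ℕ} (hn : 2 ≤ n) (G : SimpleGraph (Fin n))
    [DecidableRel G.Adj] (hconn : G.Connected) (hm : 1 ≤ G.edgeFinset.card)
    (γ : Fin n → ℝ) (e : Equiv.Perm (Fin n))
    (hγ : ∀ i, γ i = |qEig G (e i) - 2 * mE G / (n : ℝ)|)
    (hmono : Antitone γ)
    (hlow : γ ⟨n - 1, by omega⟩
      ≥ Real.sqrt (mE G * ((n : ℝ) ^ 3 - (n : ℝ) ^ 2 - 2 * mE G * (n : ℝ) + 4 * mE G))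
          / (2 * (n : ℝ))) :
    QE G ≥ (2 * Real.sqrt 2 / 3)
        * Real.sqrt ((2 * mE G + ((G.maxDegree : ℝ) - (G.minDegree : ℝ)) ^ 2 / 2) * (n : ℝ))
    ∧ (QE G = (2 * Real.sqrt 2 / 3)
          * Real.sqrt ((2 * mE G + ((G.maxDegree : ℝ) - (G.minDegree : ℝ)) ^ 2 / 2) * (n : ℝ))
        ↔ Nonempty (G ≃g SimpleGraph.completeGraph (Fin 3))) := by
  classical
  have hcard : Fintype.card (Fin n) = n := Fintype.card_fin n
  have hcard2 : 2 ≤ Fintype.card (Fin n) := by omega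
  obtain ⟨q, hq⟩ : ∃ x, x = qEig G := ⟨_, rfl⟩
  obtain ⟨m, hmdef⟩ : ∃ x, x = mE G := ⟨_, rfl⟩
  rw [← hq, ← hmdef] at hγ
  rw [← hmdef] at hlow
  rw [← hmdef]
  have hN2 : (2:ℝ) ≤ (n:ℝ) := by exact_mod_cast hn
  have hNpos : (0:ℝ) < (n:ℝ) := by linarith
  have hm1 : (1:ℝ) ≤ m := by rw [hmdef, mE]; exact_mod_cast hm
  obtain ⟨μ, hμ⟩ : ∃ x, x = 2 * m / (n:ℝ) := ⟨_, rfl⟩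
  rw [← hμ] at hγ
  obtain ⟨T, hTdef⟩ : ∃ x, x = ∑ i, (q i - μ)^2 := ⟨_, rfl⟩
  have hT0 : 0 ≤ T := by rw [hTdef]; positivity
  have hsq : ∑ i, q i = 2 * m := by rw [hq, hmdef]; exact sum_qEig G
  have hsq2 : ∑ i, (q i)^2 = M1 G + 2*m := by rw [hq, hmdef]; exact sum_qEig_sq G
  have hTval : T = M1 G + 2*m - 4*m^2/(n:ℝ) := by
    have hpt : ∀ i : Fin n, (q i - μ)^2 = (q i)^2 - 2*μ*(q i) + μ^2 := fun i => by ring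
    rw [hTdef, Finset.sum_congr rfl (fun i _ => hpt i), Finset.sum_add_distrib,
      Finset.sum_sub_distrib, ← Finset.mul_sum, hsq, hsq2, Finset.sum_const, Finset.card_univ,
      hcard, nsmul_eq_mul, hμ]
    field_simp
    ring
  have hQEeq : QE G = ∑ i, |q i - μ| := by
    rw [QE, hcard, ← hq, ← hmdef, ← hμ]
  have hγQE : ∑ i, γ i = QE G := by
    rw [hQEeq, Finset.sum_congr rfl (fun i (_ : i ∈ univ) => hγ i)]
    exact Equiv.sum_comp e (fun j => |q j - μ|)
  have hγsq : ∑ i, (γ i)^2 = T := by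
    have : ∀ i : Fin n, (γ i)^2 = (q (e i) - μ)^2 := fun i => by rw [hγ i]; exact sq_abs _
    rw [Finset.sum_congr rfl (fun i _ => this i), hTdef]
    exact Equiv.sum_comp e (fun j => (q j - μ)^2)
  have hsum0 : ∑ i, (q i - μ) = 0 := by
    rw [Finset.sum_sub_distrib, hsq, Finset.sum_const, Finset.card_univ, hcard, nsmul_eq_mul, hμ]
    field_simp
    ring
  have hLag : ∀ i, (n:ℝ) * (q i - μ)^2 ≤ ((n:ℝ) - 1) * T := by
    intro i
    have h1 : ∑ j ∈ univ.erase i, (q j - μ) = -(q i - μ) := by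
      rw [Finset.sum_erase_eq_sub (Finset.mem_univ i), hsum0]; ring
    have h2 : ∑ j ∈ univ.erase i, (q j - μ)^2 = T - (q i - μ)^2 := by
      rw [Finset.sum_erase_eq_sub (Finset.mem_univ i), hTdef]
    have h3 := sq_sum_le_card_mul_sum_sq (s := univ.erase i) (f := fun j => q j - μ)
    rw [h1, h2, Finset.card_erase_of_mem (Finset.mem_univ i), Finset.card_univ, hcard] at h3
    have hcast : ((n - 1 : ℕ) : ℝ) = (n:ℝ) - 1 := by
      rw [Nat.cast_sub (by omega)]; norm_num
    rw [hcast] at h3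
    nlinarith [h3]
  have h2m : 2*m ≤ (n:ℝ)*((n:ℝ)-1) := by
    have h := sum_deg_real G
    have hb : ∀ v : Fin n, (G.degree v : ℝ) ≤ (n:ℝ) - 1 := by
      intro v
      have := (Nat.cast_le (α := ℝ)).mpr (G.degree_lt_card_verts v)
      rw [hcard] at this
      push_cast at this; linarith
    have := Finset.sum_le_sum (fun v (_ : v ∈ univ) => hb v)
    rw [h, Finset.sum_const, Finset.card_univ, hcard, nsmul_eq_mul] at this
    rw [← hmdef] at this
    linarith
  obtain ⟨c, hcdef⟩ : ∃ x, x = m * ((n : ℝ) ^ 3 - (n : ℝ) ^ 2 - 2 * m * (n : ℝ) + 4 * m) := ⟨_, rfl⟩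
  rw [← hcdef] at hlow
  have hc_pos : 0 < c := by
    rw [hcdef]
    have key : 2*m*((n:ℝ)-2) ≤ (n:ℝ)*((n:ℝ)-1)*((n:ℝ)-2) :=
      mul_le_mul_of_nonneg_right h2m (by linarith)
    nlinarith [key, hm1, hN2]
  have hTc : (n:ℝ)*((n:ℝ)-1)*T ≤ c := by
    have hdc := deCaen G hconn hcard2
    rw [hcard] at hdc
    rw [← hmdef] at hdc
    have hTN : (n:ℝ)*T = (n:ℝ)*(M1 G) + 2*m*(n:ℝ) - 4*m^2 := by
      rw [hTval]; field_simp
    have key : ((n:ℝ)-1)*((n:ℝ)*M1 G) = (n:ℝ)*(((n:ℝ)-1)*M1 G) := by ring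
    have key2 : (n:ℝ)*(((n:ℝ)-1)*M1 G) ≤ (n:ℝ)*(2*m^2 + m*((n:ℝ)-1)*((n:ℝ)-2)) :=
      mul_le_mul_of_nonneg_left hdc hNpos.le
    calc (n:ℝ)*((n:ℝ)-1)*T = ((n:ℝ)-1)*((n:ℝ)*T) := by ring
      _ = ((n:ℝ)-1)*((n:ℝ)*M1 G) + 2*m*(n:ℝ)*((n:ℝ)-1) - 4*m^2*((n:ℝ)-1) := by rw [hTN]; ring
      _ ≤ (n:ℝ)*(2*m^2 + m*((n:ℝ)-1)*((n:ℝ)-2)) + 2*m*(n:ℝ)*((n:ℝ)-1) - 4*m^2*((n:ℝ)-1) := by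
          rw [key]; linarith [key2]
      _ = c := by rw [hcdef]; ring
  obtain ⟨a, hadef⟩ : ∃ x, x = γ (⟨n - 1, by omega⟩ : Fin n) := ⟨_, rfl⟩
  have ha_lb : Real.sqrt c / (2*(n:ℝ)) ≤ a := by rw [hadef]; exact hlow
  have ha_pos : 0 < a :=
    lt_of_lt_of_le (div_pos (Real.sqrt_pos.mpr hc_pos) (by linarith)) ha_lb
  have hγ_ge : ∀ i, a ≤ γ i := by
    intro i
    rw [hadef]
    apply hmono
    have hi : (i : ℕ) ≤ n - 1 := by omega
    exact Fin.le_def.mpr hi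
  have hclb : c ≤ 4*(n:ℝ)^2*a^2 := by
    have h1 : Real.sqrt c ≤ a * (2*(n:ℝ)) := by
      rw [div_le_iff₀ (by linarith)] at ha_lb; linarith
    have h2 : Real.sqrt c ^ 2 = c := Real.sq_sqrt hc_pos.le
    nlinarith [Real.sqrt_nonneg c, h1, h2]
  have hγ_le : ∀ i, γ i ≤ 2*a := by
    intro i
    have h1 : (n:ℝ) * (q (e i) - μ)^2 ≤ ((n:ℝ) - 1) * T := hLag (e i)
    have h2 : (γ i)^2 = (q (e i) - μ)^2 := by rw [hγ i]; exact sq_abs _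
    have e1 := mul_le_mul_of_nonneg_left h1 hNpos.le
    have h4 : (n:ℝ)^2*(γ i)^2 ≤ (n:ℝ)^2*(4*a^2) := by nlinarith [e1, hTc, hclb, h2]
    have h5 : (γ i)^2 ≤ 4*a^2 :=
      le_of_mul_le_mul_left h4 (by positivity : (0:ℝ) < (n:ℝ)^2)
    have h6 : 0 ≤ γ i := by rw [hγ i]; positivity
    nlinarith [h5, h6, ha_pos]
  have hpt : ∀ i, (γ i)^2 + 2*a^2 ≤ 3*a*(γ i) := by
    intro i
    nlinarith [mul_nonneg (sub_nonneg.mpr (hγ_ge i)) (sub_nonneg.mpr (hγ_le i))]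
  have hsum_pt : T + 2*(n:ℝ)*a^2 ≤ 3*a*QE G := by
    have h := Finset.sum_le_sum (fun i (_ : i ∈ univ) => hpt i)
    rw [Finset.sum_add_distrib, hγsq, Finset.sum_const, Finset.card_univ, hcard, nsmul_eq_mul,
      ← Finset.mul_sum, hγQE] at h
    linarith
  have hAM : 2*Real.sqrt (2*(n:ℝ)*T)*a ≤ T + 2*(n:ℝ)*a^2 := by
    have h := sq_nonneg (Real.sqrt T - Real.sqrt (2*(n:ℝ))*a)
    have h1 : Real.sqrt T^2 = T := Real.sq_sqrt hT0
    have h2 : Real.sqrt (2*(n:ℝ))^2 = 2*(n:ℝ) := Real.sq_sqrt (by linarith)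
    have h3 : Real.sqrt (2*(n:ℝ)*T) = Real.sqrt (2*(n:ℝ)) * Real.sqrt T :=
      Real.sqrt_mul (by linarith) T
    nlinarith [h, h1, h2, h3]
  have hQE_ge : 2*Real.sqrt (2*(n:ℝ)*T) ≤ 3*QE G := by
    have h := le_trans hAM hsum_pt
    have h2 : (2*Real.sqrt (2*(n:ℝ)*T))*a ≤ (3*QE G)*a := by linarith
    exact le_of_mul_le_mul_right h2 ha_pos
  obtain ⟨Δ, hΔ⟩ : ∃ x, x = (G.maxDegree : ℝ) := ⟨_, rfl⟩
  obtain ⟨δ', hδ'⟩ : ∃ x, x = (G.minDegree : ℝ) := ⟨_, rfl⟩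
  rw [← hΔ, ← hδ']
  have hTlow : 2*m + (Δ - δ')^2/2 ≤ T := by
    have hvar : ∑ v, ((G.degree v:ℝ) - μ)^2 = M1 G - 4*m^2/(n:ℝ) := by
      have hpt2 : ∀ v : Fin n, ((G.degree v:ℝ) - μ)^2
          = ((G.degree v:ℝ))^2 - 2*μ*((G.degree v:ℝ)) + μ^2 := fun v => by ring
      rw [Finset.sum_congr rfl (fun v _ => hpt2 v), Finset.sum_add_distrib,
        Finset.sum_sub_distrib, ← Finset.mul_sum, sum_deg_real, Finset.sum_const,
        Finset.card_univ, hcard, nsmul_eq_mul, ← hmdef, M1, hμ]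
      field_simp
      ring
    have hne : Nonempty (Fin n) := ⟨⟨0, by omega⟩⟩
    by_cases hEq : G.maxDegree = G.minDegree
    · have hzero : (Δ - δ')^2 = 0 := by rw [hΔ, hδ', hEq]; ring
      have hnn : 0 ≤ ∑ v, ((G.degree v:ℝ) - μ)^2 := by positivity
      rw [hzero]
      rw [hvar] at hnn
      linarith [hTval, hnn]
    · obtain ⟨u, hu⟩ := G.exists_maximal_degree_vertex
      obtain ⟨w, hw⟩ := G.exists_minimal_degree_vertex
      have huw : u ≠ w := by
        intro h; apply hEq; rw [hu, hw, h]
      have hsub : ((G.degree u:ℝ) - μ)^2 + ((G.degree w:ℝ) - μ)^2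
          ≤ ∑ v, ((G.degree v:ℝ) - μ)^2 := by
        have h := Finset.sum_le_sum_of_subset_of_nonneg (Finset.subset_univ {u, w})
          (fun v _ _ => sq_nonneg ((G.degree v:ℝ) - μ))
        rwa [Finset.sum_pair huw] at h
      have hΔu : Δ = (G.degree u : ℝ) := by rw [hΔ, hu]
      have hδw : δ' = (G.degree w : ℝ) := by rw [hδ', hw]
      rw [hvar, ← hΔu, ← hδw] at hsub
      nlinarith [hsub, sq_nonneg (Δ + δ' - 2*μ), hTval]
  have hmono_sqrt : Real.sqrt (2*(n:ℝ)*(2*m + (Δ - δ')^2/2)) ≤ Real.sqrt (2*(n:ℝ)*T) :=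
    Real.sqrt_le_sqrt (by nlinarith [hTlow, hNpos])
  have hRHSeq : (2*Real.sqrt 2/3)*Real.sqrt ((2*m + (Δ - δ')^2/2)*(n:ℝ))
      = (2/3)*Real.sqrt (2*((n:ℝ)*(2*m + (Δ - δ')^2/2))) := by
    rw [Real.sqrt_mul (by norm_num : (0:ℝ) ≤ 2) ((n:ℝ)*(2*m + (Δ - δ')^2/2))]
    rw [show (n:ℝ)*(2*m + (Δ - δ')^2/2) = (2*m + (Δ - δ')^2/2)*(n:ℝ) by ring]
    ring
  have hfin : (2/3)*Real.sqrt (2*((n:ℝ)*(2*m + (Δ - δ')^2/2))) ≤ QE G := by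
    have : Real.sqrt (2*((n:ℝ)*(2*m + (Δ - δ')^2/2))) = Real.sqrt (2*(n:ℝ)*(2*m + (Δ - δ')^2/2)) := by
      ring_nf
    rw [this]
    linarith [hQE_ge, hmono_sqrt]
  constructor
  · rw [ge_iff_le, hRHSeq]
    exact hfin
  constructor
  · -- equality implies K3
    intro heq
    have hQEval : 3 * QE G = 2 * Real.sqrt (2*(n:ℝ)*T) := by
      have h1 : QE G = (2/3)*Real.sqrt (2*((n:ℝ)*(2*m + (Δ - δ')^2/2))) := by
        rw [heq, hRHSeq]
      have h2 : Real.sqrt (2*((n:ℝ)*(2*m + (Δ - δ')^2/2)))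
          = Real.sqrt (2*(n:ℝ)*(2*m + (Δ - δ')^2/2)) := by ring_nf
      have h3 : 3 * QE G ≤ 2*Real.sqrt (2*(n:ℝ)*T) := by
        rw [h1, h2]; linarith [hmono_sqrt]
      linarith [hQE_ge, h3]
    have hE1 : T + 2*(n:ℝ)*a^2 = 3*a*(QE G) := by
      have h5 : 3*QE G*a = 2*Real.sqrt (2*(n:ℝ)*T)*a := by rw [hQEval]
      have h4 : 3*a*QE G ≤ T + 2*(n:ℝ)*a^2 := by nlinarith [hAM, h5]
      exact le_antisymm hsum_pt h4
    have hE2 : 2*Real.sqrt (2*(n:ℝ)*T)*a = T + 2*(n:ℝ)*a^2 := by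
      have h5 : 3*QE G*a = 2*Real.sqrt (2*(n:ℝ)*T)*a := by rw [hQEval]
      have h5' : T + 2*(n:ℝ)*a^2 ≤ 2*Real.sqrt (2*(n:ℝ)*T)*a := by nlinarith [hE1, h5]
      exact le_antisymm hAM h5' 
    have hsq2N : Real.sqrt (2*(n:ℝ))^2 = 2*(n:ℝ) := Real.sq_sqrt (by linarith)
    have hsqT : Real.sqrt T^2 = T := Real.sq_sqrt hT0
    have hsplitsqrt : Real.sqrt (2*(n:ℝ)*T) = Real.sqrt (2*(n:ℝ)) * Real.sqrt T :=
      Real.sqrt_mul (by linarith) T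
    have hdiff : (Real.sqrt T - Real.sqrt (2*(n:ℝ))*a)^2 = 0 := by
      have hE2' : 2*(Real.sqrt (2*(n:ℝ))*Real.sqrt T)*a = T + 2*(n:ℝ)*a^2 := by
        rw [← hsplitsqrt]; exact hE2
      linear_combination hsqT + hsq2N*a^2 - hE2' 
    have hTeq : T = 2*(n:ℝ)*a^2 := by
      have h6 : Real.sqrt T = Real.sqrt (2*(n:ℝ))*a := by
        have h7 := pow_eq_zero_iff (n := 2) (two_ne_zero) |>.mp hdiff
        linarith [sub_eq_zero.mp h7]
      have h8 : T = (Real.sqrt (2*(n:ℝ))*a)^2 := by rw [← h6, hsqT]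
      rw [h8, mul_pow, hsq2N]
    have hγdich : ∀ i, γ i = a ∨ γ i = 2*a := by
      have hzero : ∑ i, (3*a*γ i - (γ i)^2 - 2*a^2) = 0 := by
        rw [Finset.sum_sub_distrib, Finset.sum_sub_distrib, ← Finset.mul_sum, hγQE, hγsq,
          Finset.sum_const, Finset.card_univ, hcard, nsmul_eq_mul]
        linarith [hE1]
      have hnn : ∀ i ∈ univ, (0:ℝ) ≤ 3*a*γ i - (γ i)^2 - 2*a^2 := fun i _ => by linarith [hpt i]
      have heach := (Finset.sum_eq_zero_iff_of_nonneg hnn).mp hzero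
      intro i
      have h7 := heach i (Finset.mem_univ i)
      have h8 : (γ i - a)*(γ i - 2*a) = 0 := by linear_combination -h7
      rcases mul_eq_zero.mp h8 with h|h
      · left; linarith [sub_eq_zero.mp h]
      · right; linarith [sub_eq_zero.mp h]
    obtain ⟨K, hKdef⟩ : ∃ k, k = (univ.filter (fun i : Fin n => γ i = 2*a)).card := ⟨_, rfl⟩
    obtain ⟨K', hK'def⟩ : ∃ k, k = (univ.filter (fun i : Fin n => ¬ γ i = 2*a)).card := ⟨_, rfl⟩
    have hKK' : K + K' = n := by
      rw [hKdef, hK'def]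
      rw [Finset.card_filter_add_card_filter_not (p := fun i : Fin n => γ i = 2*a),
        Finset.card_univ, hcard]
    have hTsplit : T = (K:ℝ)*(4*a^2) + (K':ℝ)*a^2 := by
      have e1 : ∑ i ∈ univ.filter (fun i : Fin n => γ i = 2*a), (γ i)^2 = (K:ℝ)*(4*a^2) := by
        rw [Finset.sum_congr rfl (fun i hi =>
          (by rw [(Finset.mem_filter.mp hi).2] : (γ i)^2 = (2*a)^2)),
          Finset.sum_const, nsmul_eq_mul, hKdef]
        ring
      have e2 : ∑ i ∈ univ.filter (fun i : Fin n => ¬ γ i = 2*a), (γ i)^2 = (K':ℝ)*a^2 := by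
        rw [Finset.sum_congr rfl (fun i hi =>
          (by rw [(hγdich i).resolve_right (Finset.mem_filter.mp hi).2] : (γ i)^2 = a^2)),
          Finset.sum_const, nsmul_eq_mul, hK'def]
      rw [← hγsq, ← Finset.sum_filter_add_sum_filter_not univ (fun i : Fin n => γ i = 2*a)
        (fun i => (γ i)^2), e1, e2]
    have ha2pos : 0 < a^2 := by positivity
    have h2n : 2*(n:ℝ) = 4*(K:ℝ) + (K':ℝ) := by
      have h10 : (2*(n:ℝ))*a^2 = (4*(K:ℝ) + (K':ℝ))*a^2 := by
        rw [← hTeq]  -- ?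
        rw [hTsplit]; ring
      exact mul_right_cancel₀ (ne_of_gt ha2pos) h10
    have hnK : n = 3*K := by
      have hc1 : 2*n = 4*K + K' := by exact_mod_cast h2n
      omega
    have hn3 : n = 3 := by
      have h9 : 2*(n:ℝ)^2*((n:ℝ)-1)*a^2 ≤ 4*(n:ℝ)^2*a^2 := by
        calc 2*(n:ℝ)^2*((n:ℝ)-1)*a^2 = (n:ℝ)*((n:ℝ)-1)*T := by rw [hTeq]; ring
        _ ≤ c := hTc
        _ ≤ 4*(n:ℝ)^2*a^2 := hclb
      have h10 : (n:ℝ) ≤ 3 := by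
        have hNa : 0 < (n:ℝ)^2*a^2 := by positivity
        by_contra hgt
        push_neg at hgt
        have h12 : 2*((n:ℝ)^2*a^2)*2 < 2*((n:ℝ)^2*a^2)*((n:ℝ)-1) :=
          mul_lt_mul_of_pos_left (by linarith) (by positivity)
        linarith
      have h11 : n ≤ 3 := by exact_mod_cast h10
      omega
    subst hn3
    have hd1 : ∀ v : Fin 3, 1 ≤ G.degree v := fun v => degree_pos_of_connected G hconn hcard2 v
    have hd2 : ∀ v : Fin 3, G.degree v ≤ 2 := fun v => by
      have h12 := G.degree_lt_card_verts v; rw [hcard] at h12; omega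
    have hsumd : ∑ v, G.degree v = 2 * G.edgeFinset.card := G.sum_degrees_eq_twice_card_edges
    have hm0ge : 2 ≤ G.edgeFinset.card := by
      have h12 : 3 ≤ ∑ v, G.degree v := by
        calc 3 = ∑ _v : Fin 3, 1 := by simp
        _ ≤ ∑ v, G.degree v := Finset.sum_le_sum (fun v _ => hd1 v)
      omega
    have hm0le : G.edgeFinset.card ≤ 3 := by
      have h13 : ∑ v, G.degree v ≤ 6 := by
        calc ∑ v, G.degree v ≤ ∑ _v : Fin 3, 2 := Finset.sum_le_sum (fun v _ => hd2 v)
        _ = 6 := by simp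
      omega
    rcases (by omega : G.edgeFinset.card = 2 ∨ G.edgeFinset.card = 3) with hm0 | hm0
    · exfalso
      have hmval : m = 2 := by rw [hmdef, mE, hm0]; norm_num
      have hμval : μ = 4/3 := by rw [hμ, hmval]; norm_num
      have hdich : ∀ v : Fin 3, G.degree v = 1 ∨ G.degree v = 2 := fun v => by
        have := hd1 v; have := hd2 v; omega
      have hsum4 : ∑ v, (G.degree v:ℝ) = 4 := by
        rw [sum_deg_real, ← hmdef, hmval]; norm_num
      have hM1 : M1 G = 6 := by
        have hptd : ∀ v : Fin 3, (G.degree v:ℝ)^2 = 3*(G.degree v:ℝ) - 2 := fun v => by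
          rcases hdich v with h|h <;> rw [h] <;> norm_num
        rw [M1, Finset.sum_congr rfl (fun v _ => hptd v), Finset.sum_sub_distrib,
          ← Finset.mul_sum, hsum4, Finset.sum_const, Finset.card_univ, hcard]
        norm_num
      have hTval2 : T = 14/3 := by rw [hTval, hM1, hmval]; norm_num
      have ha2 : a^2 = 7/9 := by
        have h14 := hTeq
        rw [hTval2] at h14
        push_cast at h14
        linarith
      have hqdich : ∀ j, |q j - μ| = a ∨ |q j - μ| = 2*a := by
        intro j
        have h14 := hγdich (e.symm j)
        rw [hγ (e.symm j), Equiv.apply_symm_apply] at h14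
        exact h14
      have hqne : ∀ j, q j ≠ 0 := by
        intro j h0
        have h15 := hqdich j
        rw [h0, hμval] at h15
        have habs : |(0:ℝ) - 4/3| = 4/3 := by norm_num
        rw [habs] at h15
        rcases h15 with h|h
        · rw [← h] at ha2; norm_num at ha2
        · have h16 : a = 2/3 := by linarith
          rw [h16] at ha2; norm_num at ha2
      obtain ⟨v0, hv0⟩ : ∃ v : Fin 3, G.degree v = 2 := by
        by_contra hno
        push_neg at hno
        have hall1 : ∀ v : Fin 3, G.degree v = 1 := fun v => (hdich v).resolve_right (hno v)
        have h16 : ∑ v, G.degree v = 3 := by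
          rw [Finset.sum_congr rfl (fun v _ => hall1 v)]; simp
        omega
      have hNv0 : G.neighborFinset v0 = univ.erase v0 := by
        apply Finset.eq_of_subset_of_card_le
        · intro w hw
          have hadj := (SimpleGraph.mem_neighborFinset G v0 w).mp hw
          exact Finset.mem_erase.mpr ⟨(G.ne_of_adj hadj).symm, Finset.mem_univ w⟩
        · rw [Finset.card_erase_of_mem (Finset.mem_univ v0), Finset.card_univ, hcard,
            SimpleGraph.card_neighborFinset_eq_degree, hv0]
      have hadjv0 : ∀ u : Fin 3, u ≠ v0 → G.Adj v0 u := by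
        intro u hu
        have h17 : u ∈ G.neighborFinset v0 := by
          rw [hNv0]; exact Finset.mem_erase.mpr ⟨hu, Finset.mem_univ u⟩
        exact (SimpleGraph.mem_neighborFinset G v0 u).mp h17
      have hdeg1 : ∀ u : Fin 3, u ≠ v0 → G.degree u = 1 := by
        intro u hu
        have hmem : u ∈ univ.erase v0 := Finset.mem_erase.mpr ⟨hu, Finset.mem_univ u⟩
        have hs1 : ∑ v ∈ univ.erase v0, G.degree v + G.degree v0 = ∑ v, G.degree v :=
          Finset.sum_erase_add univ _ (Finset.mem_univ v0)
        have hs2 : ∑ v ∈ (univ.erase v0).erase u, G.degree v + G.degree u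
            = ∑ v ∈ univ.erase v0, G.degree v := Finset.sum_erase_add _ _ hmem
        have hcard1 : ((univ.erase v0).erase u).card = 1 := by
          rw [Finset.card_erase_of_mem hmem, Finset.card_erase_of_mem (Finset.mem_univ v0),
            Finset.card_univ, hcard]
        have hge : 1 ≤ ∑ v ∈ (univ.erase v0).erase u, G.degree v := by
          calc 1 = ∑ _v ∈ (univ.erase v0).erase u, 1 := by rw [Finset.sum_const, hcard1]; simp
          _ ≤ _ := Finset.sum_le_sum (fun v _ => hd1 v)
        have := hd1 u
        omega
      obtain ⟨x, hxdef⟩ : ∃ x : Fin 3 → ℝ, x = fun u => if u = v0 then (-1:ℝ) else 1 := ⟨_, rfl⟩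
      have hxne : x ≠ 0 := by
        intro h
        have h18 := congrFun h v0
        rw [hxdef] at h18
        simp at h18
      have hmv : (signlessLaplacian G) *ᵥ x = 0 := by
        funext u
        have hrow : (signlessLaplacian G *ᵥ x) u
            = (G.degree u : ℝ) * x u + ∑ w ∈ G.neighborFinset u, x w := by
          rw [signlessLaplacian, Matrix.add_mulVec, Pi.add_apply, Matrix.mulVec_diagonal,
            SimpleGraph.adjMatrix_mulVec_apply]
        rw [hrow, Pi.zero_apply]
        by_cases hu : u = v0
        · subst hu
          have hxu : x u = -1 := by rw [hxdef]; simp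
          have hsum1 : ∑ w ∈ G.neighborFinset u, x w = 2 := by
            rw [hNv0, hxdef]
            rw [Finset.sum_congr rfl (fun w hw => if_neg (Finset.mem_erase.mp hw).1)]
            rw [Finset.sum_const, Finset.card_erase_of_mem (Finset.mem_univ u),
              Finset.card_univ, hcard]
            norm_num
          rw [hxu, hv0, hsum1]
          norm_num
        · have hdu : G.degree u = 1 := hdeg1 u hu
          have hv0mem : v0 ∈ G.neighborFinset u :=
            (SimpleGraph.mem_neighborFinset G u v0).mpr ((hadjv0 u hu).symm)
          have hNu : G.neighborFinset u = {v0} := by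
            refine (Finset.eq_of_subset_of_card_le (Finset.singleton_subset_iff.mpr hv0mem) ?_).symm
            rw [SimpleGraph.card_neighborFinset_eq_degree, hdu, Finset.card_singleton]
          have hxu : x u = 1 := by rw [hxdef]; simp [hu]
          have hxv0 : x v0 = -1 := by rw [hxdef]; simp
          rw [hNu, Finset.sum_singleton, hxu, hxv0, hdu]
          norm_num
      have hdet0 : (signlessLaplacian G).det = 0 :=
        Matrix.exists_mulVec_eq_zero_iff.mp ⟨x, hxne, hmv⟩
      have hprod := (signlessLaplacian_isHermitian G).det_eq_prod_eigenvalues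
      rw [hdet0] at hprod
      have hprod0 : ∏ i, (signlessLaplacian_isHermitian G).eigenvalues i = 0 := by
        exact_mod_cast hprod.symm
      obtain ⟨j, _, hj⟩ := Finset.prod_eq_zero_iff.mp hprod0
      exact hqne j (by rw [hq]; exact hj)
    · have hGtop : G = ⊤ := by
        apply SimpleGraph.edgeFinset_inj.mp
        apply Finset.eq_of_subset_of_card_le
        · exact SimpleGraph.edgeFinset_mono le_top
        · rw [SimpleGraph.card_edgeFinset_top_eq_card_choose_two, hcard, hm0]
          decide
      refine ⟨?_⟩
      rw [hGtop]
  · -- K3 implies equality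
    rintro ⟨iso⟩
    have hn3 : n = 3 := by
      have h19 := Fintype.card_congr iso.toEquiv
      simpa using h19
    subst hn3
    have hGtop : G = ⊤ := by
      ext u v
      rw [SimpleGraph.top_adj]
      constructor
      · exact fun h => G.ne_of_adj h
      · intro hne
        have h20 : iso u ≠ iso v := fun h => hne (iso.toEquiv.injective h)
        exact iso.map_adj_iff.mp h20
    have hdeg : ∀ v : Fin 3, G.degree v = 2 := by
      intro v
      have hN : G.neighborFinset v = univ.erase v := by
        ext w
        rw [SimpleGraph.mem_neighborFinset, Finset.mem_erase, hGtop, SimpleGraph.top_adj]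
        constructor
        · exact fun h => ⟨h.symm, Finset.mem_univ w⟩
        · exact fun h => h.1.symm
      rw [← SimpleGraph.card_neighborFinset_eq_degree, hN,
        Finset.card_erase_of_mem (Finset.mem_univ v), Finset.card_univ, hcard]
    have hmval : m = 3 := by
      have h21 := sum_deg_real G
      rw [← hmdef] at h21
      rw [Finset.sum_congr rfl (fun v (_ : v ∈ univ) => by rw [hdeg v])] at h21
      simp at h21
      linarith
    have hμval : μ = 2 := by rw [hμ, hmval]; norm_num
    have hM1 : M1 G = 12 := by
      rw [M1, Finset.sum_congr rfl (fun v (_ : v ∈ univ) => by rw [hdeg v])]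
      norm_num [Fin.sum_univ_three]
    have hΔval : Δ = 2 := by
      have hle : G.maxDegree ≤ 2 := SimpleGraph.maxDegree_le_of_forall_degree_le G 2
        (fun v => (hdeg v).le)
      have hge : 2 ≤ G.maxDegree := (hdeg 0) ▸ G.degree_le_maxDegree 0
      rw [hΔ]
      have h22 : G.maxDegree = 2 := le_antisymm hle hge
      rw [h22]; norm_num
    have hδval : δ' = 2 := by
      have hle : G.minDegree ≤ 2 := (hdeg 0) ▸ G.minDegree_le_degree 0
      have hge : 2 ≤ G.minDegree := SimpleGraph.le_minDegree_of_forall_le_degree G 2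
        (fun v => (hdeg v).ge)
      rw [hδ']
      have h23 : G.minDegree = 2 := le_antisymm hle hge
      rw [h23]; norm_num
    have hQmat : signlessLaplacian G = Matrix.of (fun i j : Fin 3 => if i = j then (2:ℝ) else 1) := by
      ext i j
      rw [signlessLaplacian]
      by_cases hij : i = j
      · subst hij
        simp [Matrix.diagonal_apply_eq, hdeg i]
      · have hadj : G.Adj i j := by rw [hGtop]; exact hij
        simp [Matrix.diagonal_apply_ne _ hij, hadj, hij]
    have htr : ∀ k, (signlessLaplacian G ^ k).trace = ∑ i, q i ^ k := by
      intro k; rw [hq, qEig]; exact trace_pow_eq_sum_eig _ k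
    have hS1 : ∑ i, q i = 6 := by rw [hsq, hmval]; norm_num
    have hS2 : ∑ i, q i^2 = 18 := by rw [hsq2, hM1, hmval]; norm_num
    have hS3 : ∑ i, q i ^ 3 = 66 := by
      rw [← htr 3, hQmat]
      norm_num [Matrix.trace, Matrix.diag, pow_succ, pow_zero, Matrix.one_mul,
        Matrix.mul_apply, Fin.sum_univ_three]
      simp (config := {decide := true})
      norm_num
    have hS4 : ∑ i, q i ^ 4 = 258 := by
      rw [← htr 4, hQmat]
      norm_num [Matrix.trace, Matrix.diag, pow_succ, pow_zero, Matrix.one_mul,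
        Matrix.mul_apply, Fin.sum_univ_three]
      simp (config := {decide := true})
      norm_num
    have hzero : ∑ i, ((q i - 1)^2*(q i - 4)^2) = 0 := by
      have hptq : ∀ i : Fin 3, (q i - 1)^2*(q i - 4)^2
          = q i^4 - 10*q i^3 + 33*q i^2 - 40*q i + 16 := fun i => by ring
      rw [Finset.sum_congr rfl (fun i _ => hptq i)]
      simp only [Finset.sum_add_distrib, Finset.sum_sub_distrib, ← Finset.mul_sum,
        Finset.sum_const, Finset.card_univ, hcard, nsmul_eq_mul]
      rw [hS1, hS2, hS3, hS4]
      norm_num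
    have hq14 : ∀ i, q i = 1 ∨ q i = 4 := by
      have hnn : ∀ i ∈ univ, (0:ℝ) ≤ (q i - 1)^2*(q i - 4)^2 :=
        fun i _ => mul_nonneg (sq_nonneg _) (sq_nonneg _)
      have heach := (Finset.sum_eq_zero_iff_of_nonneg hnn).mp hzero
      intro i
      have h24 := heach i (Finset.mem_univ i)
      rcases mul_eq_zero.mp h24 with h|h
      · left
        have := pow_eq_zero_iff (n := 2) two_ne_zero |>.mp h
        linarith [sub_eq_zero.mp this]
      · right
        have := pow_eq_zero_iff (n := 2) two_ne_zero |>.mp h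
        linarith [sub_eq_zero.mp this]
    have hQEval : QE G = 4 := by
      rw [hQEeq, hμval]
      have hptabs : ∀ i : Fin 3, |q i - 2| = (q i + 2)/3 := by
        intro i
        rcases hq14 i with h|h <;> rw [h] <;> norm_num
      rw [Finset.sum_congr rfl (fun i _ => hptabs i), ← Finset.sum_div,
        Finset.sum_add_distrib, hS1, Finset.sum_const, Finset.card_univ, hcard, nsmul_eq_mul]
      norm_num
    rw [hQEval, hΔval, hδval, hmval]
    have h25 : ((2:ℝ)*3 + (2-2)^2/2)*((3:ℕ):ℝ) = 18 := by norm_num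
    rw [h25]
    have h18 : Real.sqrt 18 = 3*Real.sqrt 2 := by
      rw [show (18:ℝ) = 3^2*2 by norm_num, Real.sqrt_mul (by positivity), Real.sqrt_sq (by norm_num)]
    rw [h18]
    have h2s : Real.sqrt 2 * Real.sqrt 2 = 2 := Real.mul_self_sqrt (by norm_num)
    linear_combination (-2 : ℝ) * h2s
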